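/- For all a ∈ ℂ, a ≠ 0, and n ≥ 1, the Charlier polynomials satisfy (a−n)·C_n(x;a) + n·(C_n(x;a) − C_{n−1}(x;a)) = a·C_n(x+1;a). -/
import Mathlib


open Finset

noncomputable def poch (a : ℂ) (k : ℕ) : ℂ := ∏ i ∈ Finset.range k, (a + i)

/-- Charlier polynomial `C_n(x;a)`. -/
noncomputable def charlier (n : ℕ) (a x : ℂ) : ℂ :=
  ∑ k ∈ Finset.range (n + 1),
    poch (-(n : ℂ)) k * poch (-x) k / (k.factorial : ℂ) * (-1 / a) ^ k

@[simp] lemma poch_zero (a : ℂ) : poch a 0 = 1 := by simp [poch]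

lemma poch_succ' (a : ℂ) (k : ℕ) : poch a (k + 1) = a * poch (a + 1) k := by
  unfold poch
  rw [Finset.prod_range_succ']
  rw [mul_comm]
  congr 1
  · push_cast; ring
  · exact Finset.prod_congr rfl fun i _ => by push_cast; ring

lemma poch_diff (x : ℂ) (k : ℕ) :
    poch (-x) (k + 1) = poch (-(x + 1)) (k + 1) + ((k : ℂ) + 1) * poch (-x) k := by
  rw [poch_succ' (-(x + 1)) k]
  have h : -(x + 1) + 1 = -x := by ring
  rw [h]
  unfold poch
  rw [Finset.prod_range_succ]
  ring

theorem charlier_backward_shift (a x : ℂ) (ha : a ≠ 0) (n : ℕ) (hn : 1 ≤ n) :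
    (a - n) * charlier n a x + (n : ℂ) * (charlier n a x - charlier (n - 1) a x) =
      a * charlier n a (x + 1) := by
  obtain ⟨m, rfl⟩ : ∃ m, n = m + 1 := ⟨n - 1, (Nat.succ_pred_eq_of_pos hn).symm⟩
  simp only [Nat.add_sub_cancel]
  have key : a * (charlier (m + 1) a x - charlier (m + 1) a (x + 1))
      = ((m : ℂ) + 1) * charlier m a x := by
    unfold charlier
    rw [← Finset.sum_sub_distrib, Finset.mul_sum, Finset.sum_range_succ']
    simp only [poch_zero, pow_zero, Nat.factorial_zero, Nat.cast_one, mul_one, one_mul,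
      div_one, sub_self, mul_zero, add_zero]
    rw [Finset.mul_sum]
    refine Finset.sum_congr rfl fun j _ => ?_
    have e : (-(((m : ℕ) + 1 : ℕ) : ℂ)) + 1 = -(m : ℂ) := by push_cast; ring
    have h1 : poch (-(((m : ℕ) + 1 : ℕ) : ℂ)) (j + 1)
        = -((m : ℂ) + 1) * poch (-(m : ℂ)) j := by
      rw [poch_succ', e]; push_cast; ring
    have h2 := poch_diff x j
    have hf : (((j + 1).factorial : ℕ) : ℂ) = ((j : ℂ) + 1) * (j.factorial : ℂ) := by
      rw [Nat.factorial_succ]; push_cast; ring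
    have hfj : (j.factorial : ℂ) ≠ 0 := Nat.cast_ne_zero.mpr j.factorial_ne_zero
    have hj1 : ((j : ℂ) + 1) ≠ 0 := by exact_mod_cast Nat.succ_ne_zero j
    rw [h1, h2, hf, pow_succ]
    set t := (-1 / a) ^ j with ht
    field_simp
    ring
  push_cast at key ⊢
  linear_combination key
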